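/- Let V be a finite-dimensional complex inner product space, let c ≥ 1 and N ≥ 1, and for each i ∈ {1,…,c} and l ∈ {1,…,N} let γ_{i,l} be an orthogonal projection on V (self-adjoint and idempotent), such that all the cN operators γ_{i,l} pairwise commute. Set g_{i,l} := 1 − γ_{i,l} and, for each i and 0 ≤ n ≤ N, P_{i,n} := Σ_{S ⊆ {1,…,N}, |S| = n} (Π_{l ∈ S} g_{i,l}) ∘ (Π_{l ∉ S} γ_{i,l}). Let ϖ : ℕ → ℝ be nonnegative and subadditive, i.e. ϖ(m+n) ≤ ϖ(m) + ϖ(n) for all m, n ∈ ℕ. Then for every vector Ψ ∈ V: ⟨Ψ, (Σ_{(n₁,…,n_c) ∈ {0,…,N}^c} ϖ(n₁ + ⋯ + n_c) • Π_{i=1}^{c} P_{i,n_i}) Ψ⟩ ≤ Σ_{i=1}^{c} ⟨Ψ, (Σ_{n=0}^{N} ϖ(n) • P_{i,n}) Ψ⟩, where both sides are real numbers (all the operators involved are self-adjoint and the products Π_i P_{i,n_i} are positive semidefinite). -/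

import Mathlib

open Finset

/-- Product of a family of (pairwise commuting) elements over a finite index
set, taken in increasing order of the indices. -/
def oprod {ι M : Type*} [LinearOrder ι] [Monoid M] (S : Finset ι) (f : ι → M) : M :=
  ((S.sort (· ≤ ·)).map f).prod

/-- The counting element
`P n = Σ_{S ⊆ {1,…,N}, |S| = n} (Π_{l ∈ S} (1 - e l)) · (Π_{l ∉ S} e l)`. -/
def badP {R : Type*} [Ring R] {N : ℕ} (e : Fin N → R) (n : ℕ) : R :=
  ∑ S ∈ powersetCard n (univ : Finset (Fin N)),
    oprod S (fun l => 1 - e l) * oprod Sᶜ e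

theorem oprod_eq_prod {ι M : Type*} [LinearOrder ι] [CommMonoid M] (S : Finset ι) (f : ι → M) :
    oprod S f = ∏ l ∈ S, f l := by
  rw [oprod, Finset.prod_eq_multiset_prod, ← Finset.sort_eq S (· ≤ ·),
    Multiset.map_coe, Multiset.prod_coe]

theorem map_oprod {ι R S : Type*} [LinearOrder ι] [Ring R] [Ring S] (f : R →+* S)
    (T : Finset ι) (g : ι → R) : f (oprod T g) = oprod T (fun l => f (g l)) := by
  simp [oprod, map_list_prod, List.map_map, Function.comp_def]

theorem map_badP {R S : Type*} [Ring R] [Ring S] (f : R →+* S) {N : ℕ} (e : Fin N → R) (n : ℕ) :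
    f (badP e n) = badP (fun l => f (e l)) n := by
  simp [badP, map_oprod]

theorem subadd_sum {α : Type*} (ϖ : ℕ → ℝ) (hsub : ∀ m n, ϖ (m + n) ≤ ϖ m + ϖ n)
    {s : Finset α} (hs : s.Nonempty) (f : α → ℕ) :
    ϖ (∑ a ∈ s, f a) ≤ ∑ a ∈ s, ϖ (f a) := by
  induction hs using Finset.Nonempty.cons_induction with
  | singleton a => simp
  | cons a s h hs ih =>
      rw [Finset.sum_cons, Finset.sum_cons]
      exact (hsub _ _).trans (by linarith)

section CommRingLemmas
variable {A : Type*} [CommRing A] {N : ℕ}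

theorem badP_comm (e : Fin N → A) (n : ℕ) :
    badP e n = ∑ S ∈ powersetCard n (univ : Finset (Fin N)),
      (∏ l ∈ S, (1 - e l)) * ∏ l ∈ Sᶜ, e l := by
  simp [badP, oprod_eq_prod]

theorem sum_badP (e : Fin N → A) : ∑ n ∈ range (N + 1), badP e n = 1 := by
  calc ∑ n ∈ range (N + 1), badP e n
      = ∑ S ∈ (univ : Finset (Fin N)).powerset,
          (∏ l ∈ S, (1 - e l)) * ∏ l ∈ Sᶜ, e l := by
        rw [Finset.sum_powerset, card_univ, Fintype.card_fin]
        simp [badP_comm]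
    _ = 1 := by
        rw [powerset_univ]
        have h := (Fintype.prod_add (fun l => (1 : A) - e l) e).symm
        simpa using h

theorem term_orth (e : Fin N → A) (hid : ∀ l, e l * e l = e l)
    {S S' : Finset (Fin N)} {l : Fin N} (hl : l ∈ S) (hl' : l ∉ S') :
    ((∏ k ∈ S, (1 - e k)) * ∏ k ∈ Sᶜ, e k) * ((∏ k ∈ S', (1 - e k)) * ∏ k ∈ S'ᶜ, e k) = 0 := by
  have hlc : l ∈ S'ᶜ := Finset.mem_compl.mpr hl'
  rw [← Finset.mul_prod_erase _ _ hl, ← Finset.mul_prod_erase _ _ hlc]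
  have h0 : (1 - e l) * e l = 0 := by linear_combination -hid l
  linear_combination ((∏ k ∈ S.erase l, (1 - e k)) * (∏ k ∈ Sᶜ, e k) *
    (∏ k ∈ S', (1 - e k)) * (∏ k ∈ S'ᶜ.erase l, e k)) * h0

theorem badP_mul_badP (e : Fin N → A) (hid : ∀ l, e l * e l = e l) (n : ℕ) :
    badP e n * badP e n = badP e n := by
  have hg : ∀ l, ((1:A) - e l) * (1 - e l) = 1 - e l := fun l => by linear_combination hid l
  rw [badP_comm, Finset.sum_mul_sum]
  refine Finset.sum_congr rfl ?_
  intro S hS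
  rw [Finset.sum_eq_single_of_mem S hS]
  · calc ((∏ l ∈ S, (1 - e l)) * ∏ l ∈ Sᶜ, e l) * ((∏ l ∈ S, (1 - e l)) * ∏ l ∈ Sᶜ, e l)
        = ((∏ l ∈ S, (1 - e l)) * (∏ l ∈ S, (1 - e l))) *
            ((∏ l ∈ Sᶜ, e l) * (∏ l ∈ Sᶜ, e l)) := by ring
      _ = (∏ l ∈ S, (1 - e l)) * ∏ l ∈ Sᶜ, e l := by
          rw [← Finset.prod_mul_distrib, ← Finset.prod_mul_distrib]
          exact congrArg₂ (· * ·) (Finset.prod_congr rfl fun l _ => hg l)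
            (Finset.prod_congr rfl fun l _ => hid l)
  · intro S' hS' hne
    have hcard : S'.card = S.card := by
      rw [(Finset.mem_powersetCard.mp hS').2, (Finset.mem_powersetCard.mp hS).2]
    have hns : ¬ S' ⊆ S := by
      intro hsub'
      exact hne (Finset.eq_of_subset_of_card_le hsub' (le_of_eq hcard.symm))
    obtain ⟨l, hl, hl'⟩ := Finset.not_subset.mp hns
    rw [mul_comm]
    exact term_orth e hid hl hl'

end CommRingLemmas

/-- **Counting lemma, first assertion** (Section 5.2 of the paper): for
pairwise commuting orthogonal projections `γ i l` (`i ∈ {1,…,c}`,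
`l ∈ {1,…,N}`) on a finite-dimensional complex inner product space, class-wise
counting operators `P_{i,n}`, and a nonnegative subadditive weight `ϖ`,
`⟨Ψ, (Σ_{n₁,…,n_c} ϖ(n₁+⋯+n_c) • Π_i P_{i,n_i}) Ψ⟩ ≤ Σ_i ⟨Ψ, (Σ_n ϖ(n) • P_{i,n}) Ψ⟩`
for every `Ψ`, both sides being real. -/
theorem counting_lemma_subadditive
    {V : Type*} [NormedAddCommGroup V] [InnerProductSpace ℂ V]
    [FiniteDimensional ℂ V] {c N : ℕ} (hc1 : 1 ≤ c) (hN : 1 ≤ N)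
    (γ : Fin c → Fin N → Module.End ℂ V)
    (hidem : ∀ i l, γ i l * γ i l = γ i l)
    (hsa : ∀ i l, LinearMap.IsSymmetric (γ i l))
    (hcomm : ∀ i l i' l', Commute (γ i l) (γ i' l'))
    (ϖ : ℕ → ℝ) (hnonneg : ∀ n, 0 ≤ ϖ n)
    (hsub : ∀ m n, ϖ (m + n) ≤ ϖ m + ϖ n) (Ψ : V) :
    (inner ℂ Ψ
        ((∑ ν : Fin c → Fin (N + 1),
            (ϖ (∑ i, (ν i : ℕ)) : ℂ) •
              oprod Finset.univ (fun i => badP (γ i) (ν i))) Ψ) : ℂ).re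
      ≤ ∑ i : Fin c,
          (inner ℂ Ψ
            ((∑ n ∈ Finset.range (N + 1), (ϖ n : ℂ) • badP (γ i) n) Ψ) : ℂ).re := by
  classical
  haveI : Nonempty (Fin c) := ⟨⟨0, hc1⟩⟩
  set sγ : Set (Module.End ℂ V) := {x | ∃ i l, γ i l = x} with hsγdef
  have hscomm : ∀ x ∈ sγ, ∀ y ∈ sγ, x * y = y * x := by
    rintro x ⟨i, l, rfl⟩ y ⟨i', l', rfl⟩
    exact (hcomm i l i' l').eq
  letI : CommRing (Subring.closure sγ) := Subring.closureCommRingOfComm hscomm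
  have hcommT : ∀ x ∈ Subring.closure sγ, ∀ y ∈ Subring.closure sγ, x * y = y * x := by
    intro x hx y hy
    exact congrArg Subtype.val (mul_comm (⟨x, hx⟩ : Subring.closure sγ) ⟨y, hy⟩)
  have hstar : ∀ x ∈ Subring.closure sγ, star x = x := by
    intro x hx
    induction hx using Subring.closure_induction with
    | mem x hxs => ?_
    | zero => exact star_zero _
    | one => exact star_one _
    | add x y hx hy ihx ihy => rw [star_add, ihx, ihy]
    | neg x hx ihx => rw [star_neg, ihx]
    | mul x y hx hy ihx ihy => rw [star_mul, ihx, ihy, hcommT y hy x hx]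
    obtain ⟨i, l, rfl⟩ := hxs
    exact ((LinearMap.isSymmetric_iff_isSelfAdjoint _).mp (hsa i l)).star_eq
  let e' : Fin c → Fin N → Subring.closure sγ :=
    fun i l => ⟨γ i l, Subring.subset_closure ⟨i, l, rfl⟩⟩
  let P' : Fin c → ℕ → Subring.closure sγ := fun i n => badP (e' i) n
  have hide' : ∀ i l, e' i l * e' i l = e' i l := fun i l => Subtype.ext (hidem i l)
  have hPmap : ∀ i n, (P' i n : Module.End ℂ V) = badP (γ i) n := fun i n =>
    map_badP (Subring.closure sγ).subtype (e' i) n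
  have hPidem : ∀ i n, P' i n * P' i n = P' i n := fun i n => badP_mul_badP (e' i) (hide' i) n
  have hPsum : ∀ i, ∑ n ∈ Finset.range (N + 1), P' i n = 1 := fun i => sum_badP (e' i)
  let Q' : (Fin c → Fin (N + 1)) → Subring.closure sγ := fun ν => ∏ i, P' i ((ν i : ℕ))
  have hQidem : ∀ ν, Q' ν * Q' ν = Q' ν := by
    intro ν
    show (∏ i, P' i ((ν i : ℕ))) * (∏ i, P' i ((ν i : ℕ))) = ∏ i, P' i ((ν i : ℕ))
    rw [← Finset.prod_mul_distrib]
    exact Finset.prod_congr rfl fun i _ => hPidem i (ν i)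
  have hQmap : ∀ ν, ((Q' ν : Module.End ℂ V)) = oprod univ (fun i => badP (γ i) (ν i)) := by
    intro ν
    have h1 : Q' ν = oprod univ (fun i => P' i ((ν i : ℕ))) := (oprod_eq_prod _ _).symm
    rw [h1,
      show ((oprod univ (fun i => P' i ((ν i : ℕ))) : Subring.closure sγ) : Module.End ℂ V)
        = (Subring.closure sγ).subtype (oprod univ (fun i => P' i ((ν i : ℕ)))) from rfl,
      map_oprod]
    simp only [Subring.coe_subtype, hPmap]
  have pos : ∀ ν, 0 ≤ (inner ℂ Ψ ((Q' ν : Module.End ℂ V) Ψ) : ℂ).re := by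
    intro ν
    have hxsa : star ((Q' ν : Module.End ℂ V)) = (Q' ν : Module.End ℂ V) :=
      hstar _ (Q' ν).2
    have hxid : (Q' ν : Module.End ℂ V) * (Q' ν : Module.End ℂ V) = (Q' ν : Module.End ℂ V) := by
      rw [← Subring.coe_mul]
      exact congrArg _ (hQidem ν)
    have hsym : LinearMap.IsSymmetric ((Q' ν : Module.End ℂ V)) :=
      (LinearMap.isSymmetric_iff_isSelfAdjoint _).mpr hxsa
    have h1 : (inner ℂ Ψ ((Q' ν : Module.End ℂ V) Ψ) : ℂ)
        = inner ℂ ((Q' ν : Module.End ℂ V) Ψ) ((Q' ν : Module.End ℂ V) Ψ) := by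
      conv_lhs => rw [← hxid]
      rw [Module.End.mul_apply]
      exact (hsym Ψ ((Q' ν : Module.End ℂ V) Ψ)).symm
    rw [h1]
    simpa using inner_self_nonneg (𝕜 := ℂ) (x := ((Q' ν : Module.End ℂ V) Ψ))
  have hfiber : ∀ (i : Fin c) (n : Fin (N + 1)),
      ∑ ν ∈ univ.filter (fun ν : Fin c → Fin (N + 1) => ν i = n), Q' ν = P' i ((n : ℕ)) := by
    intro i n
    have hset : univ.filter (fun ν : Fin c → Fin (N + 1) => ν i = n)
        = Fintype.piFinset (fun j => if j = i then ({n} : Finset (Fin (N + 1))) else univ) := by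
      ext ν
      simp only [Finset.mem_filter, Finset.mem_univ, true_and, Fintype.mem_piFinset]
      constructor
      · intro h j
        by_cases hj : j = i
        · subst hj; simp [h]
        · simp [hj]
      · intro h
        have := h i
        simpa using this
    have hsum : ∀ j : Fin c,
        (∑ m ∈ (if j = i then ({n} : Finset (Fin (N + 1))) else univ), P' j ((m : ℕ)))
          = if j = i then P' i ((n : ℕ)) else 1 := by
      intro j
      by_cases hj : j = i
      · subst hj; simp
      · simp only [hj, if_false]
        rw [← hPsum j, ← Fin.sum_univ_eq_sum_range]
    rw [hset]
    show (∑ ν ∈ Fintype.piFinset fun j => if j = i then ({n} : Finset (Fin (N + 1))) else univ,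
        ∏ i', P' i' ((ν i' : ℕ))) = P' i ((n : ℕ))
    rw [← Finset.prod_univ_sum (fun j => if j = i then ({n} : Finset (Fin (N + 1))) else univ)
      (fun j m => P' j ((m : ℕ)))]
    rw [Finset.prod_congr rfl fun j _ => hsum j]
    simp
  have hP : ∀ (i : Fin c) (n : Fin (N + 1)),
      (inner ℂ Ψ ((badP (γ i) ((n : ℕ))) Ψ) : ℂ).re
        = ∑ ν ∈ univ.filter (fun ν : Fin c → Fin (N + 1) => ν i = n),
            (inner ℂ Ψ ((Q' ν : Module.End ℂ V) Ψ) : ℂ).re := by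
    intro i n
    rw [← hPmap, ← hfiber i n, AddSubmonoidClass.coe_finset_sum]
    simp only [LinearMap.sum_apply, inner_sum, Complex.re_sum]
  have hLHS : (inner ℂ Ψ ((∑ ν : Fin c → Fin (N + 1),
        (ϖ (∑ i, (ν i : ℕ)) : ℂ) • oprod Finset.univ (fun i => badP (γ i) (ν i))) Ψ) : ℂ).re
      = ∑ ν : Fin c → Fin (N + 1),
          ϖ (∑ i, (ν i : ℕ)) * (inner ℂ Ψ ((Q' ν : Module.End ℂ V) Ψ) : ℂ).re := by
    simp only [← hQmap, LinearMap.sum_apply, LinearMap.smul_apply, inner_sum, inner_smul_right,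
      Complex.re_sum]
    exact Finset.sum_congr rfl fun ν _ => by rw [Complex.re_ofReal_mul]
  have hRHS : ∀ i : Fin c,
      (inner ℂ Ψ ((∑ n ∈ Finset.range (N + 1), (ϖ n : ℂ) • badP (γ i) n) Ψ) : ℂ).re
        = ∑ n ∈ Finset.range (N + 1), ϖ n * (inner ℂ Ψ ((badP (γ i) n) Ψ) : ℂ).re := by
    intro i
    simp only [LinearMap.sum_apply, LinearMap.smul_apply, inner_sum, inner_smul_right,
      Complex.re_sum]
    exact Finset.sum_congr rfl fun n _ => by rw [Complex.re_ofReal_mul]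
  rw [hLHS]
  simp only [hRHS]
  have step1 : ∑ ν : Fin c → Fin (N + 1),
        ϖ (∑ i, (ν i : ℕ)) * (inner ℂ Ψ ((Q' ν : Module.End ℂ V) Ψ) : ℂ).re
      ≤ ∑ ν : Fin c → Fin (N + 1),
          (∑ i, ϖ ((ν i : ℕ))) * (inner ℂ Ψ ((Q' ν : Module.End ℂ V) Ψ) : ℂ).re := by
    refine Finset.sum_le_sum fun ν _ => mul_le_mul_of_nonneg_right ?_ (pos ν)
    exact subadd_sum ϖ hsub Finset.univ_nonempty _
  refine step1.trans (le_of_eq ?_)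
  have step2 : ∑ ν : Fin c → Fin (N + 1),
        (∑ i, ϖ ((ν i : ℕ))) * (inner ℂ Ψ ((Q' ν : Module.End ℂ V) Ψ) : ℂ).re
      = ∑ i : Fin c, ∑ ν : Fin c → Fin (N + 1),
          ϖ ((ν i : ℕ)) * (inner ℂ Ψ ((Q' ν : Module.End ℂ V) Ψ) : ℂ).re := by
    simp only [Finset.sum_mul]
    exact Finset.sum_comm
  rw [step2]
  refine Finset.sum_congr rfl fun i _ => ?_
  calc ∑ ν : Fin c → Fin (N + 1),
        ϖ ((ν i : ℕ)) * (inner ℂ Ψ ((Q' ν : Module.End ℂ V) Ψ) : ℂ).re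
      = ∑ n : Fin (N + 1), ∑ ν ∈ univ.filter (fun ν : Fin c → Fin (N + 1) => ν i = n),
          ϖ ((ν i : ℕ)) * (inner ℂ Ψ ((Q' ν : Module.End ℂ V) Ψ) : ℂ).re :=
        (Finset.sum_fiberwise _ _ _).symm
    _ = ∑ n : Fin (N + 1), ϖ ((n : ℕ)) *
          ∑ ν ∈ univ.filter (fun ν : Fin c → Fin (N + 1) => ν i = n),
            (inner ℂ Ψ ((Q' ν : Module.End ℂ V) Ψ) : ℂ).re := by
        refine Finset.sum_congr rfl fun n _ => ?_
        rw [Finset.mul_sum]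
        refine Finset.sum_congr rfl fun ν hν => ?_
        rw [(Finset.mem_filter.mp hν).2]
    _ = ∑ n : Fin (N + 1), ϖ ((n : ℕ)) * (inner ℂ Ψ ((badP (γ i) ((n : ℕ))) Ψ) : ℂ).re := by
        exact Finset.sum_congr rfl fun n _ => by rw [hP i n]
    _ = ∑ n ∈ Finset.range (N + 1), ϖ n * (inner ℂ Ψ ((badP (γ i) n) Ψ) : ℂ).re :=
        Fin.sum_univ_eq_sum_range (fun n => ϖ n * (inner ℂ Ψ ((badP (γ i) n) Ψ) : ℂ).re) (N + 1)
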